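/- Let p ≥ 0 and let ξ₁ < ξ₂ be real numbers. Denote by B_{i,q} the Bernstein polynomials of degree q on the reference interval [0,1], and by B^{[ξ₁,ξ₂]}_{k,p} the Bernstein polynomials of degree p on [ξ₁,ξ₂]. Then for every j = 1,…,p+1 and every real ξ, B_{j,p}(ξ) = Σ_{k=1}^{p+1} c_{kj} · B^{[ξ₁,ξ₂]}_{k,p}(ξ), where c_{kj} = Σ_{l = max(1, k+j−p−1)}^{min(k,j)} B_{l,k−1}(ξ₂) · B_{j−l+1, p−k+1}(ξ₁). Equivalently, the matrix with entries (M⁻¹)_{jk} = Σ_{l = max(1, j+k−p−1)}^{min(j,k)} B_{l,j−1}(ξ₂)·B_{k−l+1,p−j+1}(ξ₁) is invertible and is the inverse of the Bernstein basis transformation matrix M defined by the relation tilde-B = M^{−T} B between the Bernstein bases on the two intervals. -/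

import Mathlib

/-- The `i`-th (1-based) Bernstein polynomial of degree `q` on the reference interval `[0,1]`:
`B_{i,q}(x) = C(q,i−1) (1−x)^(q+1−i) x^(i−1)`. -/
noncomputable def bern01 (q i : ℕ) (x : ℝ) : ℝ :=
  (q.choose (i - 1) : ℝ) * (1 - x) ^ (q + 1 - i) * x ^ (i - 1)

/-- The `i`-th (1-based) Bernstein polynomial of degree `p` on `[a,b]`:
`B_{i,p}(x) = C(p,i−1) ((b−x)/(b−a))^(p+1−i) ((x−a)/(b−a))^(i−1)`. -/
noncomputable def bernAB (p i : ℕ) (a b x : ℝ) : ℝ :=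
  (p.choose (i - 1) : ℝ) * ((b - x) / (b - a)) ^ (p + 1 - i) * ((x - a) / (b - a)) ^ (i - 1)

/-- The matrix with entries
`(M⁻¹)_{jk} = ∑_{l = max(1, j+k−p−1)}^{min(j,k)} B_{l,j−1}(ξ₂) · B_{k−l+1,p−j+1}(ξ₁)`
(1-based indices `j,k = 1,…,p+1`; `B` are the Bernstein polynomials on `[0,1]`). -/
noncomputable def MinvMat (p : ℕ) (ξ₁ ξ₂ : ℝ) : Matrix (Fin (p + 1)) (Fin (p + 1)) ℝ :=
  Matrix.of fun j k =>
    ∑ l ∈ Finset.Icc (max 1 (((j : ℕ) + 1) + ((k : ℕ) + 1) - (p + 1)))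
        (min ((j : ℕ) + 1) ((k : ℕ) + 1)),
      bern01 (j : ℕ) l ξ₂ * bern01 (p - (j : ℕ)) (((k : ℕ) + 1) - l + 1) ξ₁

/-- The trinomial coefficient identity underlying the change of Bernstein basis. -/
lemma trinomR (p j m i : ℕ) (hj : j ≤ p) (hm : m ≤ j) (hi : i ≤ p - j) :
    ((p.choose j : ℝ)) * (j.choose m) * ((p - j).choose i) =
      (p.choose (m + i)) * ((m + i).choose m) * ((p - (m + i)).choose (j - m)) := by
  have h1 : m + i ≤ p := by omega
  have h2 : j - m ≤ p - (m + i) := by omega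
  rw [Nat.cast_choose ℝ hj, Nat.cast_choose ℝ hm, Nat.cast_choose ℝ hi,
    Nat.cast_choose ℝ h1, Nat.cast_choose ℝ (Nat.le_add_right m i), Nat.cast_choose ℝ h2]
  have e1 : m + i - m = i := by omega
  have e2 : p - (m + i) - (j - m) = p - j - i := by omega
  rw [e1, e2]
  have : ∀ n : ℕ, ((n.factorial : ℝ)) ≠ 0 := fun n => Nat.cast_ne_zero.2 n.factorial_ne_zero
  field_simp

/-- Master expansion: a reference Bernstein polynomial precomposed with the affine map
`x ↦ a(1-x)+bx` expands in the reference Bernstein basis with `MinvMat p a b` coefficients. -/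
lemma expand (p : ℕ) (a b x : ℝ) (j : Fin (p + 1)) :
    bern01 p ((j : ℕ) + 1) (a * (1 - x) + b * x) =
      ∑ k : Fin (p + 1), MinvMat p a b k j * bern01 p ((k : ℕ) + 1) x := by
  set j' := (j : ℕ) with hj'
  have hj : j' ≤ p := Nat.lt_succ_iff.mp j.isLt
  have lhs_eq : bern01 p (j' + 1) (a * (1 - x) + b * x) =
      ∑ q ∈ (Finset.range (p - j' + 1)).sigma (fun _ => Finset.range (j' + 1)),
        (p.choose j' : ℝ) *
          (((1 - b) * x) ^ q.1 * ((1 - a) * (1 - x)) ^ (p - j' - q.1) * ((p - j').choose q.1) *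
           ((b * x) ^ q.2 * (a * (1 - x)) ^ (j' - q.2) * (j'.choose q.2))) := by
    rw [Finset.sum_sigma]
    unfold bern01
    rw [show p + 1 - (j' + 1) = p - j' by omega, Nat.add_sub_cancel,
      show 1 - (a * (1 - x) + b * x) = (1 - b) * x + (1 - a) * (1 - x) by ring,
      show a * (1 - x) + b * x = b * x + a * (1 - x) by ring, add_pow, add_pow,
      mul_assoc, Finset.sum_mul_sum, Finset.mul_sum]
    refine Finset.sum_congr rfl fun i _ => ?_
    rw [Finset.mul_sum]
  rw [lhs_eq]
  have rhs_eq : (∑ k : Fin (p + 1), MinvMat p a b k j * bern01 p ((k : ℕ) + 1) x) =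
      ∑ q ∈ (Finset.range (p + 1)).sigma
          (fun k => Finset.Icc (max 1 ((k + 1) + (j' + 1) - (p + 1))) (min (k + 1) (j' + 1))),
        bern01 q.1 q.2 b * bern01 (p - q.1) ((j' + 1) - q.2 + 1) a * bern01 p (q.1 + 1) x := by
    rw [Finset.sum_sigma]
    simp only [MinvMat, Matrix.of_apply]
    rw [Fin.sum_univ_eq_sum_range (fun k =>
      (∑ l ∈ Finset.Icc (max 1 ((k + 1) + (j' + 1) - (p + 1))) (min (k + 1) (j' + 1)),
        bern01 k l b * bern01 (p - k) ((j' + 1) - l + 1) a) * bern01 p (k + 1) x)]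
    refine Finset.sum_congr rfl fun k _ => ?_
    rw [Finset.sum_mul]
  rw [rhs_eq]
  refine Finset.sum_nbij' (fun q => ⟨q.2 + q.1, q.2 + 1⟩) (fun q => ⟨q.1 + 1 - q.2, q.2 - 1⟩)
    ?_ ?_ ?_ ?_ ?_
  · rintro ⟨i, m⟩ hq
    simp only [Finset.mem_sigma, Finset.mem_range, Finset.mem_Icc] at hq ⊢
    omega
  · rintro ⟨k, l⟩ hq
    simp only [Finset.mem_sigma, Finset.mem_range, Finset.mem_Icc] at hq ⊢
    omega
  · rintro ⟨i, m⟩ hq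
    simp only [Finset.mem_sigma, Finset.mem_range, Finset.mem_Icc] at hq
    simp only [Sigma.mk.inj_iff, heq_eq_eq]
    omega
  · rintro ⟨k, l⟩ hq
    simp only [Finset.mem_sigma, Finset.mem_range, Finset.mem_Icc] at hq
    simp only [Sigma.mk.inj_iff, heq_eq_eq]
    omega
  · rintro ⟨i, m⟩ hq
    simp only [Finset.mem_sigma, Finset.mem_range, Finset.mem_Icc] at hq
    obtain ⟨hi, hm⟩ := hq
    have hi' : i ≤ p - j' := by omega
    have hm' : m ≤ j' := by omega
    simp only [bern01]
    rw [show m + 1 - 1 = m by omega, show (m + i) + 1 - (m + 1) = i by omega,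
      show (j' + 1) - (m + 1) + 1 = (j' - m) + 1 by omega, show (j' - m) + 1 - 1 = j' - m by omega,
      show (p - (m + i)) + 1 - ((j' - m) + 1) = p - j' - i by omega,
      show p + 1 - ((m + i) + 1) = (p - j' - i) + (j' - m) by omega,
      show (m + i) + 1 - 1 = m + i by omega]
    rw [pow_add, mul_pow, mul_pow, mul_pow, mul_pow]
    linear_combination ((1 - b) ^ i * x ^ i * (1 - a) ^ (p - j' - i) * (1 - x) ^ (p - j' - i) *
      b ^ m * x ^ m * a ^ (j' - m) * (1 - x) ^ (j' - m)) * trinomR p j' m i hj hm' hi'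

/-- Linear independence of the reference Bernstein polynomials as functions on `ℝ`. -/
lemma bern01_indep (p : ℕ) (c : Fin (p + 1) → ℝ)
    (h : ∀ x : ℝ, ∑ k : Fin (p + 1), c k * bern01 p ((k : ℕ) + 1) x = 0) :
    ∀ k, c k = 0 := by
  set Q : Polynomial ℝ :=
    ∑ k : Fin (p + 1), Polynomial.monomial (k : ℕ) (c k * (p.choose (k : ℕ) : ℝ)) with hQ
  have hcoeff : ∀ k : Fin (p + 1), Q.coeff (k : ℕ) = c k * (p.choose (k : ℕ) : ℝ) := by
    intro k
    rw [hQ, Polynomial.finset_sum_coeff]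
    rw [Finset.sum_eq_single k]
    · rw [Polynomial.coeff_monomial, if_pos rfl]
    · intro b _ hb
      rw [Polynomial.coeff_monomial, if_neg (by simpa [Fin.val_inj] using hb)]
    · simp
  have hQ0 : Q = 0 := by
    have hroots : ∀ y : ℝ, 0 < y → Q.eval y = 0 := by
      intro y hy
      have h1y : (0:ℝ) < 1 + y := by linarith
      have h1y' : (1:ℝ) + y ≠ 0 := ne_of_gt h1y
      have hx := h (y / (1 + y))
      have h1x : 1 - y / (1 + y) = 1 / (1 + y) := by field_simp; ring
      have : Q.eval y = (1 + y) ^ p *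
          ∑ k : Fin (p + 1), c k * bern01 p ((k : ℕ) + 1) (y / (1 + y)) := by
        rw [Finset.mul_sum, hQ, Polynomial.eval_finset_sum]
        refine Finset.sum_congr rfl fun k _ => ?_
        have hk : (k : ℕ) ≤ p := Nat.lt_succ_iff.mp k.isLt
        rw [Polynomial.eval_monomial]
        unfold bern01
        rw [show (k : ℕ) + 1 - 1 = (k : ℕ) from rfl, show p + 1 - ((k : ℕ) + 1) = p - (k : ℕ) by
          omega, h1x, div_pow, div_pow, one_pow,
          show ((1:ℝ) + y) ^ p = ((1:ℝ) + y) ^ (p - (k : ℕ)) * ((1:ℝ) + y) ^ (k : ℕ) by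
            rw [← pow_add]; congr 1; omega]
        have hpow : ((1 + y) ^ (p - (k : ℕ)) : ℝ) ≠ 0 := pow_ne_zero _ h1y'
        have hpow' : ((1 + y) ^ (k : ℕ) : ℝ) ≠ 0 := pow_ne_zero _ h1y'
        field_simp
      rw [this, hx, mul_zero]
    have hinf : {y : ℝ | Q.IsRoot y}.Infinite :=
      Set.Infinite.mono (fun y hy => hroots y hy) (Set.Ioi_infinite 0)
    exact Polynomial.eq_zero_of_infinite_isRoot Q hinf
  intro k
  have hk : (k : ℕ) ≤ p := Nat.lt_succ_iff.mp k.isLt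
  have := hcoeff k
  rw [hQ0, Polynomial.coeff_zero] at this
  have hch : ((p.choose (k : ℕ) : ℝ)) ≠ 0 := Nat.cast_ne_zero.2 (Nat.choose_pos hk).ne'
  exact (mul_eq_zero.mp this.symm).resolve_right hch

/-- For `ξ₁ < ξ₂`, the Bernstein polynomials of degree `p` on `[0,1]` are expressed in the
Bernstein basis on `[ξ₁,ξ₂]` with coefficients `c_{kj} = (M⁻¹)_{kj}` given by the explicit
formula; equivalently, the matrix `M⁻¹` is invertible and its inverse `M` is the
transformation matrix of the relation `tilde-B = M^{−T} B`, i.e. `B = Mᵀ tilde-B`. -/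
theorem stmt1 (p : ℕ) (ξ₁ ξ₂ : ℝ) (h : ξ₁ < ξ₂) :
    (∀ j : Fin (p + 1), ∀ ξ : ℝ,
      bern01 p ((j : ℕ) + 1) ξ =
        ∑ k : Fin (p + 1), MinvMat p ξ₁ ξ₂ k j * bernAB p ((k : ℕ) + 1) ξ₁ ξ₂ ξ) ∧
    IsUnit (MinvMat p ξ₁ ξ₂) ∧
    (∀ k : Fin (p + 1), ∀ ξ : ℝ,
      bernAB p ((k : ℕ) + 1) ξ₁ ξ₂ ξ =
        ∑ j : Fin (p + 1), (MinvMat p ξ₁ ξ₂)⁻¹ j k * bern01 p ((j : ℕ) + 1) ξ) := by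
  have hd : ξ₂ - ξ₁ ≠ 0 := sub_ne_zero.mpr h.ne'
  have hAB : ∀ (i : ℕ) (ξ : ℝ), bernAB p i ξ₁ ξ₂ ξ = bern01 p i ((ξ - ξ₁) / (ξ₂ - ξ₁)) := by
    intro i ξ
    unfold bernAB bern01
    rw [show (ξ₂ - ξ) / (ξ₂ - ξ₁) = 1 - (ξ - ξ₁) / (ξ₂ - ξ₁) by field_simp; ring]
  have key1 : ∀ (j : Fin (p + 1)) (ξ : ℝ), bern01 p ((j : ℕ) + 1) ξ =
      ∑ k : Fin (p + 1), MinvMat p ξ₁ ξ₂ k j * bernAB p ((k : ℕ) + 1) ξ₁ ξ₂ ξ := by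
    intro j ξ
    have hx : ξ₁ * (1 - (ξ - ξ₁) / (ξ₂ - ξ₁)) + ξ₂ * ((ξ - ξ₁) / (ξ₂ - ξ₁)) = ξ := by
      field_simp; ring
    have hE := expand p ξ₁ ξ₂ ((ξ - ξ₁) / (ξ₂ - ξ₁)) j
    rw [hx] at hE
    rw [hE]
    exact Finset.sum_congr rfl fun k _ => by rw [hAB]
  set N := MinvMat p (-ξ₁ / (ξ₂ - ξ₁)) ((1 - ξ₁) / (ξ₂ - ξ₁)) with hN
  have key2 : ∀ (k : Fin (p + 1)) (ξ : ℝ), bernAB p ((k : ℕ) + 1) ξ₁ ξ₂ ξ =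
      ∑ l : Fin (p + 1), N l k * bern01 p ((l : ℕ) + 1) ξ := by
    intro k ξ
    have hx : (-ξ₁ / (ξ₂ - ξ₁)) * (1 - ξ) + ((1 - ξ₁) / (ξ₂ - ξ₁)) * ξ =
        (ξ - ξ₁) / (ξ₂ - ξ₁) := by field_simp; ring
    have hE := expand p (-ξ₁ / (ξ₂ - ξ₁)) ((1 - ξ₁) / (ξ₂ - ξ₁)) ξ k
    rw [hx] at hE
    rw [hAB, hE]
  have hNM : N * MinvMat p ξ₁ ξ₂ = 1 := by
    ext l j
    have hz : ∀ ξ : ℝ, ∑ l : Fin (p + 1),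
        ((N * MinvMat p ξ₁ ξ₂) l j - if l = j then 1 else 0) * bern01 p ((l : ℕ) + 1) ξ = 0 := by
      intro ξ
      have h1 : bern01 p ((j : ℕ) + 1) ξ =
          ∑ l : Fin (p + 1), (N * MinvMat p ξ₁ ξ₂) l j * bern01 p ((l : ℕ) + 1) ξ := by
        calc bern01 p ((j : ℕ) + 1) ξ
            = ∑ k : Fin (p + 1), MinvMat p ξ₁ ξ₂ k j * bernAB p ((k : ℕ) + 1) ξ₁ ξ₂ ξ := key1 j ξ
          _ = ∑ k : Fin (p + 1), ∑ l : Fin (p + 1),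
                MinvMat p ξ₁ ξ₂ k j * (N l k * bern01 p ((l : ℕ) + 1) ξ) := by
              refine Finset.sum_congr rfl fun k _ => ?_
              rw [key2 k ξ, Finset.mul_sum]
          _ = ∑ l : Fin (p + 1),
                (∑ k : Fin (p + 1), N l k * MinvMat p ξ₁ ξ₂ k j) * bern01 p ((l : ℕ) + 1) ξ := by
              rw [Finset.sum_comm]
              refine Finset.sum_congr rfl fun l _ => ?_
              rw [Finset.sum_mul]
              exact Finset.sum_congr rfl fun k _ => by ring
          _ = ∑ l : Fin (p + 1), (N * MinvMat p ξ₁ ξ₂) l j * bern01 p ((l : ℕ) + 1) ξ := by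
              refine Finset.sum_congr rfl fun l _ => by rw [Matrix.mul_apply]
      simp only [sub_mul, Finset.sum_sub_distrib]
      rw [← h1]
      simp [ite_mul]
    have hl := bern01_indep p _ hz l
    rw [Matrix.one_apply]
    exact sub_eq_zero.mp hl
  refine ⟨key1, ?_, ?_⟩
  · have := invertibleOfLeftInverse _ _ hNM
    exact isUnit_of_invertible _
  · intro k ξ
    rw [Matrix.inv_eq_left_inv hNM]
    exact key2 k ξ
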